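/- For the ASEP-derived functions, the probability sum identity: ∑_{x ≥ X} F_n(x − y; t) = F_{n+1}(X − y; t) for integers X, y with X − y ≥ 0, where the sum is over integers x ≥ X. -/

import Mathlib

/-- The Pochhammer symbol `(a)_k = a (a+1) ⋯ (a+k-1)`. -/
noncomputable def poch (a : ℝ) (k : ℕ) : ℝ := ∏ i ∈ Finset.range k, (a + i)

lemma poch_zero (a : ℝ) : poch a 0 = 1 := by simp [poch]

lemma poch_succ (a : ℝ) (k : ℕ) : poch a (k+1) = poch a k * (a + k) := by
  simp [poch, Finset.prod_range_succ]

lemma poch_succ' (a : ℝ) (k : ℕ) : poch a (k+1) = a * poch (a+1) k := by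
  unfold poch
  rw [Finset.prod_range_succ']
  have h : ∀ i ∈ Finset.range k, (a + ((i+1 : ℕ):ℝ)) = (a+1) + (i:ℝ) := by
    intro i _; push_cast; ring
  rw [Finset.prod_congr rfl h]
  simp [mul_comm]

lemma poch_nonneg {a : ℝ} (ha : 0 ≤ a) (k : ℕ) : 0 ≤ poch a k :=
  Finset.prod_nonneg fun i _ => by positivity

lemma poch_pos {a : ℝ} (ha : 0 < a) (k : ℕ) : 0 < poch a k :=
  Finset.prod_pos fun i _ => by positivity

lemma fact_poch (m k : ℕ) : (m.factorial : ℝ) * poch ((m:ℝ)+1) k = ((m+k).factorial : ℝ) := by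
  induction k with
  | zero => simp [poch_zero]
  | succ k ih =>
    rw [poch_succ, ← mul_assoc, ih, show m + (k+1) = (m+k)+1 from rfl, Nat.factorial_succ]
    push_cast; ring

lemma sum_poch (x : ℝ) (l : ℕ) :
    ∑ k ∈ Finset.range (l+1), poch x k / (k.factorial : ℝ) = poch (x+1) l / (l.factorial : ℝ) := by
  induction l with
  | zero => simp [poch_zero]
  | succ l ih =>
    rw [Finset.sum_range_succ, ih, poch_succ', poch_succ]
    have h1 : ((l.factorial : ℝ)) ≠ 0 := Nat.cast_ne_zero.mpr l.factorial_ne_zero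
    have h2 : (((l+1).factorial : ℝ)) ≠ 0 := Nat.cast_ne_zero.mpr (l+1).factorial_ne_zero
    rw [Nat.factorial_succ]
    push_cast
    field_simp
    ring

lemma poch_natCast (b k : ℕ) : poch (b:ℝ) k = (b.ascFactorial k : ℝ) := by
  induction k with
  | zero => simp [poch_zero]
  | succ k ih => rw [poch_succ, ih, Nat.ascFactorial_succ]; push_cast; ring

lemma choose_le_two_pow (n k : ℕ) : n.choose k ≤ 2^n := by
  rcases le_or_gt k n with h | h
  · calc n.choose k ≤ ∑ i ∈ Finset.range (n+1), n.choose i :=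
        Finset.single_le_sum (fun i _ => Nat.zero_le _) (Finset.mem_range.mpr (Nat.lt_succ_of_le h))
      _ = 2^n := Nat.sum_range_choose n
  · rw [Nat.choose_eq_zero_of_lt h]; exact Nat.zero_le _

lemma poch_div_fact_le (b l : ℕ) :
    poch ((b:ℝ)+1) l / (l.factorial : ℝ) ≤ 2^(b+l) := by
  have h : ((b:ℝ)+1) = (((b+1 : ℕ)):ℝ) := by push_cast; ring
  rw [h, poch_natCast, Nat.ascFactorial_eq_factorial_mul_choose]
  push_cast
  have hl : (l.factorial:ℝ) ≠ 0 := Nat.cast_ne_zero.mpr l.factorial_ne_zero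
  rw [show (l.factorial:ℝ) * (((b + l).choose l : ℕ):ℝ) / (l.factorial:ℝ) = (((b + l).choose l : ℕ):ℝ) by field_simp]
  calc ((b+l).choose l : ℝ) ≤ ((2^(b+l) : ℕ) : ℝ) := by exact_mod_cast choose_le_two_pow (b+l) l
    _ = 2^(b+l) := by push_cast; ring

lemma abs_poch_le (n : ℤ) (k : ℕ) : |poch ((n:ℤ):ℝ) k| ≤ poch ((n.natAbs : ℝ)) k := by
  unfold poch
  rw [Finset.abs_prod]
  apply Finset.prod_le_prod (fun i _ => abs_nonneg _)
  intro i _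
  calc |(n:ℝ) + i| ≤ |(n:ℝ)| + |(i:ℝ)| := abs_add_le _ _
    _ = (n.natAbs : ℝ) + i := by rw [Nat.cast_natAbs]; simp [abs_of_nonneg (by positivity : (0:ℝ) ≤ (i:ℝ))]

/-- Schütz's function `F_n(m;t) = e^{-t} (t^m/m!) ∑_{k≥0} [(n)_k/(m+1)_k] t^k/k!`. -/
noncomputable def schuetzF (n : ℤ) (m : ℕ) (t : ℝ) : ℝ :=
  Real.exp (-t) * t ^ m / (m.factorial : ℝ) *
    ∑' k : ℕ, poch (n : ℝ) k / poch ((m : ℝ) + 1) k * t ^ k / (k.factorial : ℝ)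

lemma schuetzF_eq (n : ℤ) (m : ℕ) (t : ℝ) :
    schuetzF n m t = Real.exp (-t) *
      ∑' k : ℕ, poch (n:ℝ) k * t^(m+k) / (((m+k).factorial : ℝ) * (k.factorial : ℝ)) := by
  unfold schuetzF
  rw [← tsum_mul_left, ← tsum_mul_left]
  apply tsum_congr
  intro k
  have h2 : poch ((m:ℝ)+1) k ≠ 0 := ne_of_gt (poch_pos (by positivity) k)
  have h3 : (m.factorial:ℝ) ≠ 0 := Nat.cast_ne_zero.mpr m.factorial_ne_zero
  have h5 : (k.factorial:ℝ) ≠ 0 := Nat.cast_ne_zero.mpr k.factorial_ne_zero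
  rw [pow_add, ← fact_poch m k]
  field_simp

def sigmaEquiv : (Σ l : ℕ, Fin (l+1)) ≃ ℕ × ℕ where
  toFun s := (s.1 - s.2, s.2)
  invFun p := ⟨p.1 + p.2, ⟨p.2, by omega⟩⟩
  left_inv := by
    rintro ⟨l, k, hk⟩
    dsimp only
    have h : l - k + k = l := by omega
    refine Sigma.ext h ?_
    rw [Fin.heq_ext_iff (congrArg (· + 1) h)]
  right_inv := by
    rintro ⟨i, k⟩
    simp

/-- For integers `X, y` with `X − y ≥ 0`,
`∑_{x ≥ X} F_n(x − y; t) = F_{n+1}(X − y; t)` (summing over integers `x ≥ X`). -/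
theorem sum_schuetzF_shift (n : ℤ) (X y : ℤ) (hXy : 0 ≤ X - y) (t : ℝ) (ht : 0 ≤ t) :
    ∑' i : ℕ, schuetzF n ((X - y).toNat + i) t = schuetzF (n + 1) (X - y).toNat t := by
  set m := (X - y).toNat with hm
  set f : ℕ × ℕ → ℝ := fun p =>
    poch (n:ℝ) p.2 * t^(m+p.1+p.2) / (((m+p.1+p.2).factorial : ℝ) * (p.2.factorial : ℝ)) with hf
  set a : ℕ := n.natAbs with ha
  -- inner sums over each fiber of sigmaEquiv
  have hexp : ∀ (l : ℕ) (k : ℕ), k < l + 1 → m + (l - k) + k = m + l := by intro l k h; omega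
  have fiber_abs : ∀ l : ℕ, ∑ k ∈ Finset.range (l+1), |f (l - k, k)|
      ≤ (2:ℝ)^a * ((2*t)^(m+l) / ((m+l).factorial : ℝ)) := by
    intro l
    have hfac : (0:ℝ) < ((m+l).factorial : ℝ) := by positivity
    calc ∑ k ∈ Finset.range (l+1), |f (l - k, k)|
        ≤ ∑ k ∈ Finset.range (l+1), poch (a:ℝ) k / (k.factorial:ℝ) * (t^(m+l) / ((m+l).factorial : ℝ)) := by
          apply Finset.sum_le_sum
          intro k hk
          have hk' := Finset.mem_range.mp hk
          have he : m + (l - k) + k = m + l := hexp l k hk'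
          simp only [hf, he]
          rw [abs_div, abs_mul]
          have h1 : |t^(m+l)| = t^(m+l) := abs_of_nonneg (by positivity)
          have h2 : |((m+l).factorial : ℝ) * (k.factorial:ℝ)| = ((m+l).factorial : ℝ) * (k.factorial:ℝ) :=
            abs_of_nonneg (by positivity)
          rw [h1, h2]
          have h3 : |poch ((n:ℤ):ℝ) k| ≤ poch ((a:ℕ):ℝ) k := abs_poch_le n k
          calc |poch (n:ℝ) k| * t^(m+l) / (((m+l).factorial : ℝ) * (k.factorial:ℝ))
              ≤ poch (a:ℝ) k * t^(m+l) / (((m+l).factorial : ℝ) * (k.factorial:ℝ)) := by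
                apply div_le_div_of_nonneg_right ?_ ?_ |>.trans_eq rfl
                · exact mul_le_mul_of_nonneg_right h3 (by positivity)
                · positivity
            _ = poch (a:ℝ) k / (k.factorial:ℝ) * (t^(m+l) / ((m+l).factorial : ℝ)) := by ring
      _ = poch ((a:ℝ)+1) l / (l.factorial:ℝ) * (t^(m+l) / ((m+l).factorial : ℝ)) := by
          rw [← Finset.sum_mul, sum_poch]
      _ ≤ (2:ℝ)^(a+l) * (t^(m+l) / ((m+l).factorial : ℝ)) :=
          mul_le_mul_of_nonneg_right (poch_div_fact_le a l) (by positivity)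
      _ ≤ (2:ℝ)^a * ((2*t)^(m+l) / ((m+l).factorial : ℝ)) := by
          rw [mul_pow]
          have h4 : (2:ℝ)^l ≤ (2:ℝ)^(m+l) := pow_le_pow_right₀ one_le_two (by omega)
          have h5 : (0:ℝ) ≤ t^(m+l) := by positivity
          have key : (2:ℝ)^(a+l) * t^(m+l) ≤ (2:ℝ)^a * ((2:ℝ)^(m+l) * t^(m+l)) := by
            rw [pow_add, mul_assoc]
            gcongr
          calc (2:ℝ)^(a+l) * (t^(m+l) / ((m+l).factorial : ℝ))
              = ((2:ℝ)^(a+l) * t^(m+l)) / ((m+l).factorial : ℝ) := by ring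
            _ ≤ ((2:ℝ)^a * ((2:ℝ)^(m+l) * t^(m+l))) / ((m+l).factorial : ℝ) := by gcongr
            _ = (2:ℝ)^a * ((2:ℝ)^(m+l) * t^(m+l) / ((m+l).factorial : ℝ)) := by ring
  have hfin : ∀ l : ℕ, Summable (fun k : Fin (l+1) => |f (sigmaEquiv ⟨l, k⟩)|) := fun l =>
    Summable.of_finite
  have hbd : Summable (fun l : ℕ => (2:ℝ)^a * ((2*t)^(m+l) / ((m+l).factorial : ℝ))) := by
    have h1 : Summable (fun j : ℕ => (2*t)^j / (j.factorial : ℝ)) :=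
      Real.summable_pow_div_factorial (2*t)
    have h2 : Summable (fun l : ℕ => (2*t)^(m+l) / ((m+l).factorial : ℝ)) := by
      have h3 := (summable_nat_add_iff m).mpr h1
      simpa [add_comm] using h3
    exact h2.mul_left _
  have hsum_eq : ∀ l : ℕ, ∑' k : Fin (l+1), |f (sigmaEquiv ⟨l, k⟩)|
      = ∑ k ∈ Finset.range (l+1), |f (l - k, k)| := by
    intro l
    rw [tsum_fintype, ← Fin.sum_univ_eq_sum_range (fun k => |f (l - k, k)|) (l+1)]
    rfl
  have hGsum : Summable (fun s : (Σ l : ℕ, Fin (l+1)) => |f (sigmaEquiv s)|) := by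
    apply (summable_sigma_of_nonneg (fun s => abs_nonneg _)).mpr
    refine ⟨hfin, ?_⟩
    apply Summable.of_nonneg_of_le (fun l => tsum_nonneg fun k => abs_nonneg _) ?_ hbd
    intro l
    rw [hsum_eq l]
    exact fiber_abs l
  have hfsig : Summable (fun s : (Σ l : ℕ, Fin (l+1)) => f (sigmaEquiv s)) :=
    summable_abs_iff.mp hGsum
  have hfsum : Summable f := (sigmaEquiv.summable_iff).mp hfsig
  have fiber_eval : ∀ l : ℕ, ∑' k : Fin (l+1), f (sigmaEquiv ⟨l, k⟩)
      = poch ((n:ℝ)+1) l * t^(m+l) / (((m+l).factorial : ℝ) * (l.factorial : ℝ)) := by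
    intro l
    rw [tsum_fintype]
    have h1 : ∑ k : Fin (l+1), f (sigmaEquiv ⟨l, k⟩) = ∑ k ∈ Finset.range (l+1), f (l - k, k) := by
      rw [← Fin.sum_univ_eq_sum_range (fun k => f (l - k, k)) (l+1)]
      rfl
    rw [h1]
    have h2 : ∀ k ∈ Finset.range (l+1), f (l - k, k)
        = poch (n:ℝ) k / (k.factorial:ℝ) * (t^(m+l) / ((m+l).factorial : ℝ)) := by
      intro k hk
      have he := hexp l k (Finset.mem_range.mp hk)
      simp only [hf, he]
      ring
    rw [Finset.sum_congr rfl h2, ← Finset.sum_mul, sum_poch]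
    ring
  calc ∑' i : ℕ, schuetzF n (m+i) t
      = ∑' i : ℕ, Real.exp (-t) * ∑' k : ℕ, f (i, k) :=
        tsum_congr fun i => schuetzF_eq n (m+i) t
    _ = Real.exp (-t) * ∑' i : ℕ, ∑' k : ℕ, f (i, k) := tsum_mul_left
    _ = Real.exp (-t) * ∑' p : ℕ × ℕ, f p := by rw [← Summable.tsum_prod hfsum]
    _ = Real.exp (-t) * ∑' s : (Σ l : ℕ, Fin (l+1)), f (sigmaEquiv s) := by
        rw [← Equiv.tsum_eq sigmaEquiv f]
    _ = Real.exp (-t) * ∑' l : ℕ, ∑' k : Fin (l+1), f (sigmaEquiv ⟨l, k⟩) := by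
        rw [Summable.tsum_sigma hfsig]
    _ = Real.exp (-t) * ∑' l : ℕ, poch ((n:ℝ)+1) l * t^(m+l) /
          (((m+l).factorial : ℝ) * (l.factorial : ℝ)) := by
        rw [tsum_congr fiber_eval]
    _ = schuetzF (n+1) m t := by
        rw [schuetzF_eq (n+1) m t]
        push_cast
        rfl
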